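/- arXiv:1108.0258 — 2 statements merged into one kernel-verified Lean document; each statement's English description precedes it below -/
import Mathlib

section
/- Let Γ be a cancellation monoid with neutral element e, A a Γ-graded local ring with maximal graded ideal 𝔐, and L a graded left ideal of A contained in 𝔐. Let M be a finitely generated Γ-graded A-module. If LM = M, then M = {0}. -/
section

variable {Γ : Type*} [AddCancelMonoid Γ] [DecidableEq Γ]
variable {A : Type*} [Ring A] (𝒜 : Γ → AddSubgroup A) [GradedRing 𝒜]

def maximalGradedIdeal : TwoSidedIdeal A :=
  TwoSidedIdeal.span {a : A | (a ≠ 0 ∧ ∃ γ : Γ, a ∈ 𝒜 γ) ∧ ¬IsUnit a}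

/-- The additive projection onto the degree `γ` part. -/
private def gproj {M σ : Type*} [AddCommMonoid M] [SetLike σ M] [AddSubmonoidClass σ M]
    (ℳ : Γ → σ) [DirectSum.Decomposition ℳ] (γ : Γ) : M →+ M where
  toFun m := (DirectSum.decompose ℳ m γ : M)
  map_zero' := by simp
  map_add' x y := by simp

private lemma gproj_apply {M σ : Type*} [AddCommMonoid M] [SetLike σ M] [AddSubmonoidClass σ M]
    (ℳ : Γ → σ) [DirectSum.Decomposition ℳ] (γ : Γ) (m : M) :
    gproj ℳ γ m = (DirectSum.decompose ℳ m γ : M) := rfl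

/-- The maximal graded ideal is a graded ideal. -/
private lemma decompose_mem_maximalGradedIdeal {x : A}
    (hx : x ∈ maximalGradedIdeal 𝒜) (γ : Γ) :
    (DirectSum.decompose 𝒜 x γ : A) ∈ maximalGradedIdeal 𝒜 := by
  classical
  set 𝔐 := maximalGradedIdeal 𝒜 with h𝔐
  let J : TwoSidedIdeal A := TwoSidedIdeal.mk'
    {x : A | ∀ δ : Γ, (DirectSum.decompose 𝒜 x δ : A) ∈ 𝔐}
    (by intro δ; simp only [DirectSum.decompose_zero]; simpa using 𝔐.zero_mem)
    (by intro a b ha hb δ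
        have : gproj 𝒜 δ (a + b) = gproj 𝒜 δ a + gproj 𝒜 δ b := map_add _ _ _
        simp only [gproj_apply] at this
        rw [this]; exact 𝔐.add_mem (ha δ) (hb δ))
    (by intro a ha δ
        have : gproj 𝒜 δ (-a) = -(gproj 𝒜 δ a) := map_neg _ _
        simp only [gproj_apply] at this
        rw [this]; exact 𝔐.neg_mem (ha δ))
    (by intro a b hb δ
        -- decompose (a * b) δ ∈ 𝔐, knowing components of b are in 𝔐
        have hb' : b = ∑ β ∈ (DirectSum.decompose 𝒜 b).support, (DirectSum.decompose 𝒜 b β : A) :=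
          (DirectSum.sum_support_decompose 𝒜 b).symm
        have ha' : a = ∑ α ∈ (DirectSum.decompose 𝒜 a).support, (DirectSum.decompose 𝒜 a α : A) :=
          (DirectSum.sum_support_decompose 𝒜 a).symm
        rw [← gproj_apply]
        have hcalc : gproj 𝒜 δ (a * b) = ∑ α ∈ (DirectSum.decompose 𝒜 a).support,
            ∑ β ∈ (DirectSum.decompose 𝒜 b).support,
            gproj 𝒜 δ ((DirectSum.decompose 𝒜 a α : A) * (DirectSum.decompose 𝒜 b β : A)) := by
          conv_lhs => rw [ha', hb']
          rw [Finset.sum_mul_sum, map_sum]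
          exact Finset.sum_congr rfl fun α _ => map_sum _ _ _
        rw [hcalc]
        refine 𝔐.finsetSum_mem _ _ fun α _ => 𝔐.finsetSum_mem _ _ fun β _ => ?_
        have hmem : (DirectSum.decompose 𝒜 a α : A) * (DirectSum.decompose 𝒜 b β : A) ∈ 𝒜 (α + β) :=
          SetLike.mul_mem_graded (SetLike.coe_mem _) (SetLike.coe_mem _)
        by_cases h : α + β = δ
        · subst h
          rw [gproj_apply, DirectSum.decompose_of_mem_same 𝒜 hmem]
          exact 𝔐.mul_mem_left _ _ (hb β)
        · rw [gproj_apply, DirectSum.decompose_of_mem_ne 𝒜 hmem h]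
          exact 𝔐.zero_mem)
    (by intro a b ha δ
        have hb' : b = ∑ β ∈ (DirectSum.decompose 𝒜 b).support, (DirectSum.decompose 𝒜 b β : A) :=
          (DirectSum.sum_support_decompose 𝒜 b).symm
        have ha' : a = ∑ α ∈ (DirectSum.decompose 𝒜 a).support, (DirectSum.decompose 𝒜 a α : A) :=
          (DirectSum.sum_support_decompose 𝒜 a).symm
        rw [← gproj_apply]
        have hcalc : gproj 𝒜 δ (a * b) = ∑ α ∈ (DirectSum.decompose 𝒜 a).support,
            ∑ β ∈ (DirectSum.decompose 𝒜 b).support,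
            gproj 𝒜 δ ((DirectSum.decompose 𝒜 a α : A) * (DirectSum.decompose 𝒜 b β : A)) := by
          conv_lhs => rw [ha', hb']
          rw [Finset.sum_mul_sum, map_sum]
          exact Finset.sum_congr rfl fun α _ => map_sum _ _ _
        rw [hcalc]
        refine 𝔐.finsetSum_mem _ _ fun α _ => 𝔐.finsetSum_mem _ _ fun β _ => ?_
        have hmem : (DirectSum.decompose 𝒜 a α : A) * (DirectSum.decompose 𝒜 b β : A) ∈ 𝒜 (α + β) :=
          SetLike.mul_mem_graded (SetLike.coe_mem _) (SetLike.coe_mem _)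
        by_cases h : α + β = δ
        · subst h
          rw [gproj_apply, DirectSum.decompose_of_mem_same 𝒜 hmem]
          exact 𝔐.mul_mem_right _ _ (ha α)
        · rw [gproj_apply, DirectSum.decompose_of_mem_ne 𝒜 hmem h]
          exact 𝔐.zero_mem)
  have hJ : x ∈ J := by
    rw [h𝔐, maximalGradedIdeal, TwoSidedIdeal.mem_span_iff] at hx
    refine hx J ?_
    rintro a ⟨⟨ha0, ⟨δ, haδ⟩⟩, hnu⟩
    rw [SetLike.mem_coe, TwoSidedIdeal.mem_mk']
    intro δ'
    have haM : a ∈ 𝔐 := TwoSidedIdeal.subset_span ⟨⟨ha0, ⟨δ, haδ⟩⟩, hnu⟩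
    by_cases h : δ = δ'
    · rw [← h, DirectSum.decompose_of_mem_same 𝒜 haδ]; exact haM
    · rw [DirectSum.decompose_of_mem_ne 𝒜 haδ h]; exact 𝔐.zero_mem
  rw [TwoSidedIdeal.mem_mk'] at hJ
  exact hJ γ

private lemma isUnit_one_sub_of_mem (hloc : maximalGradedIdeal 𝒜 ≠ ⊤) {a : A}
    (ha0 : a ∈ 𝒜 (0 : Γ)) (haM : a ∈ maximalGradedIdeal 𝒜) : IsUnit (1 - a) := by
  by_contra h
  apply hloc
  apply TwoSidedIdeal.eq_top
  by_cases hz : (1 : A) - a = 0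
  · have ha1 : a = 1 := by rw [sub_eq_zero] at hz; exact hz.symm
    rwa [ha1] at haM
  · have h1 : (1 : A) - a ∈ maximalGradedIdeal 𝒜 := by
      refine TwoSidedIdeal.subset_span ⟨⟨hz, ⟨0, ?_⟩⟩, h⟩
      exact (𝒜 (0:Γ)).sub_mem (SetLike.one_mem_graded 𝒜) ha0
    have := (maximalGradedIdeal 𝒜).add_mem h1 haM
    simpa using this

/-- **Lemma 4.2 (graded Nakayama).**  Let `Γ` be a cancellation monoid (written
additively), `A` a `Γ`-graded local ring with maximal graded ideal `𝔐` (the graded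
local condition being that `𝔐` is proper), and `L` a graded left ideal of `A`
contained in `𝔐`.  Let `M` be a finitely generated `Γ`-graded `A`-module.  If
`L M = M`, then `M = {0}`. -/
theorem eq_zero_of_graded_left_ideal_smul_eq_self
    (hloc : maximalGradedIdeal 𝒜 ≠ ⊤)
    (L : Ideal A)
    (hLgraded : ∀ a ∈ L, ∀ γ : Γ, (DirectSum.decompose 𝒜 a γ : A) ∈ L)
    (hL𝔐 : ∀ x ∈ L, x ∈ maximalGradedIdeal 𝒜)
    {M : Type*} [AddCommGroup M] [Module A M] [Module.Finite A M]
    (ℳ : Γ → AddSubgroup M) [SetLike.GradedSMul 𝒜 ℳ] [DirectSum.Decomposition ℳ]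
    (hLM : Submodule.span A {x : M | ∃ l ∈ L, ∃ m : M, x = l • m} = ⊤) :
    ∀ m : M, m = 0 := by
  classical
  suffices H : ∀ n (s : Finset M), s.card = n → (∀ x ∈ s, ∃ γ, x ∈ ℳ γ) →
      Submodule.span A (s : Set M) = ⊤ → ∀ m : M, m = 0 by
    obtain ⟨t, ht⟩ := Module.Finite.fg_top (R := A) (M := M)
    set s₀ : Finset M := t.biUnion (fun m =>
      (DirectSum.decompose ℳ m).support.image (fun γ => (DirectSum.decompose ℳ m γ : M))) with hs₀
    have hhom : ∀ x ∈ s₀, ∃ γ, x ∈ ℳ γ := by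
      intro x hx
      simp only [hs₀, Finset.mem_biUnion, Finset.mem_image] at hx
      obtain ⟨m, _, γ, _, rfl⟩ := hx
      exact ⟨γ, SetLike.coe_mem _⟩
    have hspan : Submodule.span A (s₀ : Set M) = ⊤ := by
      rw [eq_top_iff, ← ht]
      refine Submodule.span_le.mpr fun m hm => ?_
      have hm' : m = ∑ γ ∈ (DirectSum.decompose ℳ m).support, (DirectSum.decompose ℳ m γ : M) :=
        (DirectSum.sum_support_decompose ℳ m).symm
      rw [hm']
      refine Submodule.sum_mem _ fun γ hγ => Submodule.subset_span ?_
      exact Finset.mem_coe.mpr (Finset.mem_biUnion.mpr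
        ⟨m, Finset.mem_coe.mp hm, Finset.mem_image.mpr ⟨γ, hγ, rfl⟩⟩)
    exact H s₀.card s₀ rfl hhom hspan
  intro n
  induction n with
  | zero =>
    intro s hcard _ hspan m
    rw [Finset.card_eq_zero] at hcard
    subst hcard
    rw [Finset.coe_empty, Submodule.span_empty] at hspan
    have : m ∈ (⊥ : Submodule A M) := hspan ▸ Submodule.mem_top
    simpa using this
  | succ n ih =>
    intro s hcard hhom hspan
    obtain ⟨x, hxs⟩ := Finset.card_pos.mp (by omega : 0 < s.card)
    obtain ⟨γ, hγ⟩ := hhom x hxs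
    -- every element of `M` is an `𝔐`-combination of elements of `s`
    have hrep : ∀ m : M, ∃ c : M → A, (∀ u, c u ∈ maximalGradedIdeal 𝒜) ∧ m = ∑ u ∈ s, c u • u := by
      intro m
      let N : Submodule A M :=
      { carrier := {m | ∃ c : M → A, (∀ u, c u ∈ maximalGradedIdeal 𝒜) ∧ m = ∑ u ∈ s, c u • u}
        add_mem' := by
          rintro a b ⟨c, hc, rfl⟩ ⟨c', hc', rfl⟩
          exact ⟨c + c', fun u => (maximalGradedIdeal 𝒜).add_mem (hc u) (hc' u),
            by simp [add_smul, Finset.sum_add_distrib]⟩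
        zero_mem' := ⟨0, fun u => (maximalGradedIdeal 𝒜).zero_mem, by simp⟩
        smul_mem' := by
          rintro a m ⟨c, hc, rfl⟩
          exact ⟨fun u => a * c u, fun u => (maximalGradedIdeal 𝒜).mul_mem_left _ _ (hc u),
            by rw [Finset.smul_sum]; exact Finset.sum_congr rfl fun u _ => smul_smul a (c u) u⟩ }
      have hle : (⊤ : Submodule A M) ≤ N := by
        rw [← hLM]
        refine Submodule.span_le.mpr ?_
        rintro _ ⟨l, hl, m', rfl⟩
        have hm' : m' ∈ Submodule.span A (s : Set M) := by rw [hspan]; trivial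
        obtain ⟨f, -, hf⟩ := Submodule.mem_span_finset.mp hm'
        refine ⟨fun u => l * f u, fun u => (maximalGradedIdeal 𝒜).mul_mem_right _ _ (hL𝔐 l hl), ?_⟩
        rw [← hf, Finset.smul_sum]
        exact Finset.sum_congr rfl fun u _ => smul_smul l (f u) u
      exact hle Submodule.mem_top
    obtain ⟨c, hc, hcx⟩ := hrep x
    -- the degree-γ component of each term of the relation
    have key : ∀ u ∈ s, ∃ dd : A, dd ∈ maximalGradedIdeal 𝒜 ∧ (u = x → dd ∈ 𝒜 (0 : Γ)) ∧
        gproj ℳ γ (c u • u) = dd • u := by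
      intro u hus
      by_cases hu0 : u = 0
      · exact ⟨0, (maximalGradedIdeal 𝒜).zero_mem, fun _ => (𝒜 (0:Γ)).zero_mem, by simp [hu0]⟩
      obtain ⟨δ, hδ⟩ := hhom u hus
      have hterm : ∀ β : Γ, (DirectSum.decompose 𝒜 (c u) β : A) • u ∈ ℳ (β + δ) := fun β => by
        have := SetLike.GradedSMul.smul_mem (SetLike.coe_mem (DirectSum.decompose 𝒜 (c u) β)) hδ
        simpa [vadd_eq_add] using this
      refine ⟨∑ β ∈ (DirectSum.decompose 𝒜 (c u)).support.filter (fun β => β + δ = γ),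
        (DirectSum.decompose 𝒜 (c u) β : A), ?_, ?_, ?_⟩
      · exact (maximalGradedIdeal 𝒜).finsetSum_mem _ _ fun β _ =>
          decompose_mem_maximalGradedIdeal 𝒜 (hc u) β
      · intro hux
        subst hux
        have hδγ : δ = γ := by
          by_contra hne
          have h1 := DirectSum.decompose_of_mem_ne ℳ hδ hne
          have h2 := DirectSum.decompose_of_mem_same ℳ hγ
          exact hu0 (by rw [← h2, h1])
        subst hδγ
        refine sum_mem fun β hβ => ?_
        have hβ0 : β = 0 := by
          have h3 := (Finset.mem_filter.mp hβ).2
          exact add_right_cancel (a := β) (b := δ) (by rw [h3, zero_add])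
        subst hβ0
        exact SetLike.coe_mem _
      · conv_lhs => rw [show c u = ∑ β ∈ (DirectSum.decompose 𝒜 (c u)).support,
          (DirectSum.decompose 𝒜 (c u) β : A) from (DirectSum.sum_support_decompose 𝒜 (c u)).symm]
        rw [Finset.sum_smul, map_sum, Finset.sum_smul, Finset.sum_filter]
        refine Finset.sum_congr rfl fun β _ => ?_
        by_cases h : β + δ = γ
        · subst h
          rw [if_pos rfl, gproj_apply]
          exact DirectSum.decompose_of_mem_same ℳ (hterm β)
        · rw [if_neg h, gproj_apply, DirectSum.decompose_of_mem_ne ℳ (hterm β) h]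
    obtain ⟨dx, hdxM, hdx0, hdxeq⟩ := key x hxs
    have hdx0' : dx ∈ 𝒜 (0 : Γ) := hdx0 rfl
    have hxfix : gproj ℳ γ x = x := DirectSum.decompose_of_mem_same ℳ hγ
    have hsum : x = dx • x + ∑ u ∈ s.erase x, gproj ℳ γ (c u • u) := by
      conv_lhs => rw [← hxfix, hcx]
      rw [map_sum, ← Finset.add_sum_erase _ _ hxs, hdxeq]
    have herase : ∑ u ∈ s.erase x, gproj ℳ γ (c u • u) ∈
        Submodule.span A ((s.erase x : Finset M) : Set M) := by
      refine Submodule.sum_mem _ fun u hu => ?_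
      obtain ⟨du, _, _, hdueq⟩ := key u (Finset.mem_of_mem_erase hu)
      rw [hdueq]
      exact Submodule.smul_mem _ _ (Submodule.subset_span (Finset.mem_coe.mpr hu))
    have hunit := isUnit_one_sub_of_mem 𝒜 hloc hdx0' hdxM
    obtain ⟨b, _, hb2⟩ := isUnit_iff_exists.mp hunit
    have hxmem : x ∈ Submodule.span A ((s.erase x : Finset M) : Set M) := by
      have h1 : (1 - dx) • x = ∑ u ∈ s.erase x, gproj ℳ γ (c u • u) := by
        rw [sub_smul, one_smul]
        exact sub_eq_of_eq_add' hsum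
      have h2 : x = b • ((1 - dx) • x) := by
        rw [← mul_smul, hb2, one_smul]
      have h3 := Submodule.smul_mem _ b herase
      rw [← h1] at h3
      rwa [← h2] at h3
    have hspan' : Submodule.span A ((s.erase x : Finset M) : Set M) = ⊤ := by
      rw [eq_top_iff, ← hspan]
      refine Submodule.span_le.mpr fun u hu => ?_
      rcases eq_or_ne u x with rfl | hne
      · exact hxmem
      · exact Submodule.subset_span
          (Finset.mem_coe.mpr (Finset.mem_erase.mpr ⟨hne, Finset.mem_coe.mp hu⟩))
    exact ih (s.erase x) (by rw [Finset.card_erase_of_mem hxs, hcard]; omega)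
      (fun u hu => hhom u (Finset.mem_of_mem_erase hu)) hspan'

end
end

section
/- Let Γ be a cancellation monoid with neutral element e, A a Γ-graded local ring with maximal graded ideal 𝔐, and L a graded left ideal of A contained in 𝔐. Let M be a finitely generated Γ-graded A-module and H a graded submodule of M. If M = H + LM, then M = H. -/
section

variable {Γ : Type*} [AddCancelMonoid Γ] [DecidableEq Γ]
variable {A : Type*} [Ring A] (𝒜 : Γ → AddSubgroup A) [GradedRing 𝒜]

namespace Cor43Aux

variable {M : Type*} [AddCommGroup M] [Module A M]
variable (ℳ : Γ → AddSubgroup M) [SetLike.GradedSMul 𝒜 ℳ] [DirectSum.Decomposition ℳ]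

private lemma decompose_coe_add (x y : M) (γ : Γ) :
    (DirectSum.decompose ℳ (x + y) γ : M) =
      (DirectSum.decompose ℳ x γ : M) + (DirectSum.decompose ℳ y γ : M) := by
  rw [DirectSum.decompose_add]
  simp

private lemma decompose_coe_sum {ι : Type*} [DecidableEq ι] (s : Finset ι) (f : ι → M) (γ : Γ) :
    (DirectSum.decompose ℳ (∑ i ∈ s, f i) γ : M) =
      ∑ i ∈ s, (DirectSum.decompose ℳ (f i) γ : M) := by
  induction s using Finset.induction with
  | empty => simp
  | @insert a s ha ih =>
    rw [Finset.sum_insert ha, Finset.sum_insert ha, decompose_coe_add, ih]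

/-- Key computation: any component of `c • w` lies in `K` provided all products of
homogeneous components of `c` and `w` lie in `K`. -/
private lemma decompose_smul_mem_of (K : Submodule A M) (c : A) (w : M)
    (h : ∀ α μ : Γ, (DirectSum.decompose 𝒜 c α : A) • (DirectSum.decompose ℳ w μ : M) ∈ K)
    (γ : Γ) : (DirectSum.decompose ℳ (c • w) γ : M) ∈ K := by
  classical
  rw [show c • w = ∑ α ∈ (DirectSum.decompose 𝒜 c).support,
      ∑ μ ∈ (DirectSum.decompose ℳ w).support,
        (DirectSum.decompose 𝒜 c α : A) • (DirectSum.decompose ℳ w μ : M) by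
    conv_lhs => rw [← DirectSum.sum_support_decompose 𝒜 c,
      ← DirectSum.sum_support_decompose ℳ w]
    rw [Finset.sum_smul]
    exact Finset.sum_congr rfl fun α _ => Finset.smul_sum]
  rw [decompose_coe_sum]
  refine Submodule.sum_mem _ fun α _ => ?_
  rw [decompose_coe_sum]
  refine Submodule.sum_mem _ fun μ _ => ?_
  have hm : (DirectSum.decompose 𝒜 c α : A) • (DirectSum.decompose ℳ w μ : M) ∈ ℳ (α +ᵥ μ) :=
    SetLike.GradedSMul.smul_mem (SetLike.coe_mem _) (SetLike.coe_mem _)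
  rw [vadd_eq_add] at hm
  by_cases hγ : α + μ = γ
  · subst hγ
    rw [DirectSum.decompose_of_mem_same ℳ hm]
    exact h α μ
  · rw [DirectSum.decompose_of_mem_ne ℳ hm hγ]
    exact K.zero_mem

include 𝒜 in
/-- A span of homogeneous elements is a graded submodule. -/
private lemma span_decompose_mem (s : Set M) (hs : ∀ y ∈ s, ∃ γ : Γ, y ∈ ℳ γ) :
    ∀ w ∈ Submodule.span A s, ∀ γ : Γ,
      (DirectSum.decompose ℳ w γ : M) ∈ Submodule.span A s := by
  intro w hw
  induction hw using Submodule.span_induction with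
  | mem y hy =>
    intro γ
    obtain ⟨γy, hγy⟩ := hs y hy
    by_cases hγ : γy = γ
    · subst hγ
      rw [DirectSum.decompose_of_mem_same ℳ hγy]
      exact Submodule.subset_span hy
    · rw [DirectSum.decompose_of_mem_ne ℳ hγy hγ]
      exact Submodule.zero_mem _
  | zero => intro γ; simp
  | add x y hx hy ihx ihy =>
    intro γ
    rw [decompose_coe_add]
    exact Submodule.add_mem _ (ihx γ) (ihy γ)
  | smul c x hx ih =>
    intro γ
    exact decompose_smul_mem_of 𝒜 ℳ _ c x
      (fun α μ => Submodule.smul_mem _ _ (ih μ)) γ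

/-- The `γ₀`-component of `a • x` for homogeneous `x` of degree `γ₀` is `a₀ • x`. -/
private lemma decompose_smul_same (a : A) {x : M} {γ₀ : Γ} (hx : x ∈ ℳ γ₀) :
    (DirectSum.decompose ℳ (a • x) γ₀ : M) = (DirectSum.decompose 𝒜 a 0 : A) • x := by
  classical
  conv_lhs => rw [← DirectSum.sum_support_decompose 𝒜 a, Finset.sum_smul]
  rw [decompose_coe_sum]
  have hterm : ∀ α : Γ,
      (DirectSum.decompose ℳ ((DirectSum.decompose 𝒜 a α : A) • x) γ₀ : M) =
        if α = 0 then (DirectSum.decompose 𝒜 a 0 : A) • x else 0 := by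
    intro α
    have hm : (DirectSum.decompose 𝒜 a α : A) • x ∈ ℳ (α +ᵥ γ₀) :=
      SetLike.GradedSMul.smul_mem (SetLike.coe_mem _) hx
    rw [vadd_eq_add] at hm
    by_cases hα : α = 0
    · subst hα
      rw [zero_add] at hm
      rw [DirectSum.decompose_of_mem_same ℳ hm, if_pos rfl]
    · have hne : α + γ₀ ≠ γ₀ := fun h => hα (by
        have : α + γ₀ = 0 + γ₀ := by rw [zero_add, h]
        exact add_right_cancel this)
      rw [DirectSum.decompose_of_mem_ne ℳ hm hne, if_neg hα]
  rw [Finset.sum_congr rfl fun α _ => hterm α]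
  rw [Finset.sum_ite_eq' (DirectSum.decompose 𝒜 a).support 0
    (fun _ => (DirectSum.decompose 𝒜 a 0 : A) • x)]
  split_ifs with h0
  · rfl
  · rw [DFinsupp.notMem_support_iff.mp h0]
    simp

/-- Main induction: stripping homogeneous generators one at a time. -/
private lemma main_ind
    (hloc : maximalGradedIdeal 𝒜 ≠ ⊤)
    (L' : Submodule A A)
    (hL'graded : ∀ z ∈ L', ∀ γ : Γ, (DirectSum.decompose 𝒜 z γ : A) ∈ L')
    (hL'sub : ∀ z ∈ L', z ∈ maximalGradedIdeal 𝒜)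
    (hL'right : ∀ z ∈ L', ∀ c : A, z * c ∈ L')
    (H : Submodule A M)
    (hHgraded : ∀ x ∈ H, ∀ γ : Γ, (DirectSum.decompose ℳ x γ : M) ∈ H)
    (hsum : H ⊔ Submodule.span A {x : M | ∃ a ∈ L', ∃ m : M, x = a • m} = ⊤) :
    ∀ xs : List M, (∀ y ∈ xs, ∃ γ : Γ, y ∈ ℳ γ) →
      H ⊔ Submodule.span A {y : M | y ∈ xs} = ⊤ → H = ⊤ := by
  intro xs
  induction xs with
  | nil =>
    intro _ h
    simpa using h
  | cons x s ih =>
    intro hhom htop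
    obtain ⟨γ₀, hx0⟩ := hhom x List.mem_cons_self
    set Ss : Submodule A M := Submodule.span A {y : M | y ∈ s} with hSs
    set Lx : Submodule A M := Submodule.map (LinearMap.toSpanSingleton A M x) L' with hLx
    -- claim1
    have claim1 : ∀ w ∈ Submodule.span A {y : M | y ∈ x :: s}, ∀ a ∈ L',
        a • w ∈ Lx ⊔ Ss := by
      intro w hw
      induction hw using Submodule.span_induction with
      | mem y hy =>
        intro a ha
        rcases List.mem_cons.mp hy with rfl | hy'
        · exact Submodule.mem_sup_left ⟨a, ha, rfl⟩
        · exact Submodule.mem_sup_right (Submodule.smul_mem _ a (Submodule.subset_span hy'))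
      | zero => intro a _; rw [smul_zero]; exact Submodule.zero_mem _
      | add w1 w2 _ _ ih1 ih2 =>
        intro a ha
        rw [smul_add]
        exact Submodule.add_mem _ (ih1 a ha) (ih2 a ha)
      | smul c w _ ihw =>
        intro a ha
        rw [smul_smul]
        exact ihw (a * c) (hL'right a ha c)
    -- claim2 : x ∈ H ⊔ (Lx ⊔ Ss)
    have claim2 : Submodule.span A {z : M | ∃ a ∈ L', ∃ m : M, z = a • m} ≤ H ⊔ (Lx ⊔ Ss) := by
      rw [Submodule.span_le]
      rintro z ⟨a, ha, m, rfl⟩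
      have hm : m ∈ H ⊔ Submodule.span A {y : M | y ∈ x :: s} := htop ▸ Submodule.mem_top
      obtain ⟨h, hh, w, hw, rfl⟩ := Submodule.mem_sup.mp hm
      rw [smul_add]
      exact Submodule.add_mem _ (Submodule.mem_sup_left (H.smul_mem a hh))
        (Submodule.mem_sup_right (claim1 w hw a ha))
    have hxmem : x ∈ H ⊔ (Lx ⊔ Ss) := by
      have : x ∈ H ⊔ Submodule.span A {z : M | ∃ a ∈ L', ∃ m : M, z = a • m} :=
        hsum ▸ Submodule.mem_top
      exact (sup_le le_sup_left (le_trans claim2 le_rfl)) this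
    obtain ⟨h, hh, z, hz, hrep⟩ := Submodule.mem_sup.mp hxmem
    obtain ⟨z1, hz1, w, hw, rfl⟩ := Submodule.mem_sup.mp hz
    obtain ⟨a, ha, rfl⟩ := hz1
    rw [LinearMap.toSpanSingleton_apply] at hrep
    -- hrep : h + (a • x + w) = x
    set a₀ : A := (DirectSum.decompose 𝒜 a 0 : A) with ha₀
    have key : (1 - a₀) • x ∈ H ⊔ Ss := by
      have e1 : (DirectSum.decompose ℳ (h + (a • x + w)) γ₀ : M) =
          (DirectSum.decompose ℳ h γ₀ : M) +
            ((DirectSum.decompose ℳ (a • x) γ₀ : M) + (DirectSum.decompose ℳ w γ₀ : M)) := by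
        rw [decompose_coe_add, decompose_coe_add]
      have e2 : (DirectSum.decompose ℳ (h + (a • x + w)) γ₀ : M) = x := by
        rw [hrep]
        exact DirectSum.decompose_of_mem_same ℳ hx0
      have e3 : x = (DirectSum.decompose ℳ h γ₀ : M) +
          (a₀ • x + (DirectSum.decompose ℳ w γ₀ : M)) := by
        conv_lhs => rw [← e2]
        rw [e1, decompose_smul_same 𝒜 ℳ a hx0]
      have : (1 - a₀) • x = (DirectSum.decompose ℳ h γ₀ : M) +
          (DirectSum.decompose ℳ w γ₀ : M) := by
        rw [sub_smul, one_smul, sub_eq_iff_eq_add]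
        conv_lhs => rw [e3]
        abel
      rw [this]
      refine Submodule.add_mem _ (Submodule.mem_sup_left (hHgraded h hh γ₀))
        (Submodule.mem_sup_right ?_)
      exact span_decompose_mem 𝒜 ℳ _ (fun y hy => hhom y (List.mem_cons_of_mem _ hy)) w hw γ₀
    -- 1 - a₀ is a unit
    have ha₀M : a₀ ∈ maximalGradedIdeal 𝒜 := hL'sub _ (hL'graded a ha 0)
    have hunit : IsUnit ((1 : A) - a₀) := by
      by_contra hnu
      have h1 : (1 : A) ∈ maximalGradedIdeal 𝒜 := by
        by_cases hz0 : (1 : A) - a₀ = 0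
        · rw [sub_eq_zero] at hz0
          rw [hz0]
          exact ha₀M
        · have hhom1 : (1 : A) - a₀ ∈ 𝒜 0 :=
            sub_mem (SetLike.one_mem_graded 𝒜) (SetLike.coe_mem _)
          have hm𝔐 : (1 : A) - a₀ ∈ maximalGradedIdeal 𝒜 :=
            TwoSidedIdeal.subset_span ⟨⟨hz0, ⟨0, hhom1⟩⟩, hnu⟩
          have : (1 : A) = ((1 : A) - a₀) + a₀ := by abel
          rw [this]
          exact add_mem hm𝔐 ha₀M
      exact hloc ((maximalGradedIdeal 𝒜).one_mem_iff.mp h1)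
    obtain ⟨u, hu⟩ := hunit
    have hxHS : x ∈ H ⊔ Ss := by
      have hx' : x = (↑u⁻¹ : A) • (((1 : A) - a₀) • x) := by
        rw [smul_smul, ← hu, u.inv_mul, one_smul]
      rw [hx']
      exact Submodule.smul_mem _ _ key
    have hnewtop : H ⊔ Ss = ⊤ := by
      rw [eq_top_iff, ← htop]
      refine sup_le le_sup_left ?_
      rw [Submodule.span_le]
      intro y hy
      rcases List.mem_cons.mp hy with rfl | hy'
      · exact hxHS
      · exact Submodule.mem_sup_right (Submodule.subset_span hy')
    exact ih (fun y hy => hhom y (List.mem_cons_of_mem _ hy)) hnewtop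

end Cor43Aux

open Cor43Aux in
/-- **Corollary 4.3.**  Let `Γ` be a cancellation monoid (written additively), `A` a
`Γ`-graded local ring with maximal graded ideal `𝔐` (the graded local condition being
that `𝔐` is proper), and `L` a graded left ideal of `A` contained in `𝔐`.  Let `M` be a
finitely generated `Γ`-graded `A`-module and `H` a graded submodule of `M`.  If
`M = H + L M`, then `M = H`. -/
theorem eq_top_of_sup_graded_left_ideal_smul_eq_top
    (hloc : maximalGradedIdeal 𝒜 ≠ ⊤)
    (L : Ideal A)
    (hLgraded : ∀ a ∈ L, ∀ γ : Γ, (DirectSum.decompose 𝒜 a γ : A) ∈ L)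
    (hL𝔐 : ∀ x ∈ L, x ∈ maximalGradedIdeal 𝒜)
    {M : Type*} [AddCommGroup M] [Module A M] [Module.Finite A M]
    (ℳ : Γ → AddSubgroup M) [SetLike.GradedSMul 𝒜 ℳ] [DirectSum.Decomposition ℳ]
    (H : Submodule A M)
    (hHgraded : ∀ x ∈ H, ∀ γ : Γ, (DirectSum.decompose ℳ x γ : M) ∈ H)
    (hsum : H ⊔ Submodule.span A {x : M | ∃ l ∈ L, ∃ m : M, x = l • m} = ⊤) :
    H = ⊤ := by
  classical
  -- the left ideal A·L·A
  set L' : Submodule A A := Submodule.span A {z : A | ∃ l ∈ L, ∃ c : A, z = l * c} with hL'def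
  have hL'sub : ∀ z ∈ L', z ∈ maximalGradedIdeal 𝒜 := by
    intro z hz
    induction hz using Submodule.span_induction with
    | mem y hy =>
      obtain ⟨l, hl, c, rfl⟩ := hy
      exact TwoSidedIdeal.mul_mem_right _ _ _ (hL𝔐 l hl)
    | zero => exact zero_mem _
    | add x y _ _ ihx ihy => exact add_mem ihx ihy
    | smul c x _ ihx =>
      rw [smul_eq_mul]
      exact TwoSidedIdeal.mul_mem_left _ _ _ ihx
  have hL'graded : ∀ z ∈ L', ∀ γ : Γ, (DirectSum.decompose 𝒜 z γ : A) ∈ L' := by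
    intro z hz
    induction hz using Submodule.span_induction with
    | mem y hy =>
      obtain ⟨l, hl, c, rfl⟩ := hy
      intro γ
      rw [show l * c = l • c from rfl]
      refine decompose_smul_mem_of 𝒜 𝒜 L' l c (fun α μ => ?_) γ
      rw [smul_eq_mul]
      exact Submodule.subset_span ⟨_, hLgraded l hl α, _, rfl⟩
    | zero => intro γ; simp
    | add x y _ _ ihx ihy =>
      intro γ
      rw [decompose_coe_add]
      exact Submodule.add_mem _ (ihx γ) (ihy γ)
    | smul c x _ ihx =>
      intro γ
      exact decompose_smul_mem_of 𝒜 𝒜 L' c x (fun α μ => Submodule.smul_mem _ _ (ihx μ)) γ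
  have hL'right : ∀ z ∈ L', ∀ c : A, z * c ∈ L' := by
    intro z hz
    induction hz using Submodule.span_induction with
    | mem y hy =>
      obtain ⟨l, hl, c', rfl⟩ := hy
      intro c
      rw [mul_assoc]
      exact Submodule.subset_span ⟨l, hl, c' * c, rfl⟩
    | zero => intro c; rw [zero_mul]; exact zero_mem _
    | add x y _ _ ihx ihy => intro c; rw [add_mul]; exact add_mem (ihx c) (ihy c)
    | smul d x _ ihx =>
      intro c
      rw [smul_eq_mul, mul_assoc, ← smul_eq_mul]
      exact Submodule.smul_mem _ _ (ihx c)
  -- upgrade hsum to L'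
  have hsum' : H ⊔ Submodule.span A {x : M | ∃ a ∈ L', ∃ m : M, x = a • m} = ⊤ := by
    rw [eq_top_iff, ← hsum]
    refine sup_le le_sup_left ?_
    refine le_trans (Submodule.span_mono ?_) le_sup_right
    rintro x ⟨l, hl, m, rfl⟩
    exact ⟨l, Submodule.subset_span ⟨l, hl, 1, (mul_one l).symm⟩, m, rfl⟩
  -- a finite list of homogeneous generators
  obtain ⟨G, hG⟩ := Module.Finite.fg_top (R := A) (M := M)
  set xs : List M := G.toList.flatMap (fun g =>
    ((DirectSum.decompose ℳ g).support.toList.map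
      (fun γ => (DirectSum.decompose ℳ g γ : M)))) with hxs
  have hxs_hom : ∀ y ∈ xs, ∃ γ : Γ, y ∈ ℳ γ := by
    intro y hy
    rw [hxs, List.mem_flatMap] at hy
    obtain ⟨g, _, hy2⟩ := hy
    rw [List.mem_map] at hy2
    obtain ⟨γ, _, rfl⟩ := hy2
    exact ⟨γ, SetLike.coe_mem _⟩
  have hxs_top : H ⊔ Submodule.span A {y : M | y ∈ xs} = ⊤ := by
    rw [eq_top_iff, ← hG]
    refine le_trans ?_ le_sup_right
    rw [Submodule.span_le]
    intro g hg
    have : g = ∑ γ ∈ (DirectSum.decompose ℳ g).support, (DirectSum.decompose ℳ g γ : M) :=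
      (DirectSum.sum_support_decompose ℳ g).symm
    rw [this]
    refine Submodule.sum_mem _ fun γ hγ => ?_
    refine Submodule.subset_span ?_
    rw [Set.mem_setOf_eq, hxs, List.mem_flatMap]
    exact ⟨g, Finset.mem_toList.mpr hg, List.mem_map.mpr
      ⟨γ, Finset.mem_toList.mpr hγ, rfl⟩⟩
  exact main_ind 𝒜 ℳ hloc L' hL'graded hL'sub hL'right H hHgraded hsum' xs hxs_hom hxs_top

end
end
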